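/- Let G = (V,E) be a directed graph, let A, B, C ⊆ V be pairwise disjoint, and let γ ∈ an(A ∪ B ∪ C) \ (A ∪ B ∪ C). If A ⊥_g {γ} | (B ∪ C) holds in the undirected graph (G^B_{An(A∪B∪C)})^m, then B ∪ C δ-separates A from {γ} in G; that is, A ir_δ {γ} | (B ∪ C). -/

import Mathlib

open Set

variable {V : Type*}

/-- There is a directed path (a sequence of ≥ 2 distinct vertices joined by
directed edges) from `v` to `w`; i.e. `v` is an ancestor of `w`. -/
def DirPathConn (E : V → V → Prop) (v w : V) : Prop :=
  ∃ l : List V, l.Chain' E ∧ l.Nodup ∧ 2 ≤ l.length ∧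
    l.head? = some v ∧ l.getLast? = some w

/-- `an(A)`: vertices outside `A` that are ancestors of some element of `A`. -/
def anSet (E : V → V → Prop) (A : Set V) : Set V :=
  {v | v ∉ A ∧ ∃ a ∈ A, DirPathConn E v a}

/-- `An(A) = A ∪ an(A)`, the smallest ancestral set containing `A`. -/
def AnSet (E : V → V → Prop) (A : Set V) : Set V := A ∪ anSet E A

/-- `pa(A)`: parents of `A` outside of `A`. -/
def paSet (E : V → V → Prop) (A : Set V) : Set V :=
  {v | v ∉ A ∧ ∃ a ∈ A, E v a}

/-- `cl(A) = A ∪ pa(A)`, the closure of `A`. -/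
def clSet (E : V → V → Prop) (A : Set V) : Set V := A ∪ paSet E A

/-- The induced subgraph `G_A` (as an edge relation on `V` supported on `A`). -/
def inducedGraph (E : V → V → Prop) (A : Set V) : V → V → Prop :=
  fun j k => E j k ∧ j ∈ A ∧ k ∈ A

/-- `G^B`: delete from `G` every directed edge starting in `B`. -/
def delOut (E : V → V → Prop) (B : Set V) : V → V → Prop :=
  fun j k => E j k ∧ j ∉ B

/-- The moral graph `G^m`: distinct `j, k` are adjacent iff they are joined by
an edge in some direction or have a common child. -/
def moralGraph (E : V → V → Prop) : V → V → Prop :=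
  fun j k => j ≠ k ∧ (E j k ∨ E k j ∨ ∃ c, E j c ∧ E k c)

/-- `l` is an undirected path from `v` to `w` in the undirected graph `H`:
a sequence of ≥ 2 distinct vertices, consecutive ones adjacent. -/
def IsUPath (H : V → V → Prop) (l : List V) (v w : V) : Prop :=
  l.Chain' H ∧ l.Nodup ∧ 2 ≤ l.length ∧
    l.head? = some v ∧ l.getLast? = some w

/-- `A ⊥_g B | C` in the undirected graph `H`: every path from a vertex of `A`
to a vertex of `B` contains a vertex of `C`. -/
def uSep (H : V → V → Prop) (A B C : Set V) : Prop :=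
  ∀ v ∈ A, ∀ w ∈ B, ∀ l : List V, IsUPath H l v w → ∃ c ∈ C, c ∈ l

/-- δ-separation for pairwise disjoint `A, B, C`: `A ⊥_g B | C` in the moral
graph of the subgraph of `G^B` induced by `An(A ∪ B ∪ C)`. -/
def deltaSepDisjoint (E : V → V → Prop) (A B C : Set V) : Prop :=
  uSep (moralGraph (inducedGraph (delOut E B) (AnSet E (A ∪ B ∪ C)))) A B C

/-- δ-separation `A ir_δ B | C` for general (not necessarily disjoint) sets:
`C \ B` δ-separates `A \ (B ∪ C)` from `B`. -/
def deltaSep (E : V → V → Prop) (A B C : Set V) : Prop :=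
  deltaSepDisjoint E (A \ (B ∪ C)) B (C \ B)


lemma not_nodup_decomp {l : List V} (h : ¬ l.Nodup) :
    ∃ (l₁ : List V) (x : V) (l₂ l₃ : List V), l = l₁ ++ x :: (l₂ ++ x :: l₃) := by
  induction l with
  | nil => simp at h
  | cons a t ih =>
    by_cases ha : a ∈ t
    · obtain ⟨s, u, rfl⟩ := List.append_of_mem ha
      exact ⟨[], a, s, u, rfl⟩
    · have ht : ¬ t.Nodup := fun hn => h (List.nodup_cons.2 ⟨ha, hn⟩)
      obtain ⟨l₁, x, l₂, l₃, rfl⟩ := ih ht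
      exact ⟨a :: l₁, x, l₂, l₃, rfl⟩

lemma two_le_length_of_ne {l : List V} {v w : V} (hh : l.head? = some v)
    (hl : l.getLast? = some w) (hvw : v ≠ w) : 2 ≤ l.length := by
  match l with
  | [] => simp at hh
  | [a] =>
    simp at hh hl
    exact absurd (hh.symm.trans hl) hvw
  | a :: b :: t => simp [Nat.succ_le_succ]

lemma walk_to_path (E : V → V → Prop) :
    ∀ (n : ℕ) (l : List V) (v w : V), l.length ≤ n → l.Chain' E → l.head? = some v →
      l.getLast? = some w → v ≠ w → DirPathConn E v w := by
  intro n
  induction n with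
  | zero =>
    intro l v w hlen _ hh _ _
    rw [Nat.le_zero, List.length_eq_zero_iff] at hlen
    subst hlen; simp at hh
  | succ n ih =>
    intro l v w hlen hch hh hl hvw
    by_cases hnd : l.Nodup
    · exact ⟨l, hch, hnd, two_le_length_of_ne hh hl hvw, hh, hl⟩
    · obtain ⟨l₁, x, l₂, l₃, rfl⟩ := not_nodup_decomp hnd
      have hdec := List.isChain_append.1 hch
      refine ih (l₁ ++ x :: l₃) v w ?_ ?_ ?_ ?_ hvw
      · have : (l₁ ++ x :: l₃).length + 1 ≤ (l₁ ++ x :: (l₂ ++ x :: l₃)).length := by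
          simp
        omega
      · refine List.isChain_append.2 ⟨hdec.1, ?_, ?_⟩
        · exact hdec.2.1.suffix ⟨x :: l₂, by simp⟩
        · intro a ha b hb
          exact hdec.2.2 a ha b (by simpa using hb)
      · simpa using hh
      · rw [List.getLast?_append_cons] at hl ⊢
        rw [show x :: (l₂ ++ x :: l₃) = (x :: l₂) ++ x :: l₃ by simp,
          List.getLast?_append_cons] at hl
        exact hl

lemma DirPathConn.trans' {E : V → V → Prop} {u v w : V} (h1 : DirPathConn E u v)
    (h2 : DirPathConn E v w) (huw : u ≠ w) : DirPathConn E u w := by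
  obtain ⟨l1, hc1, -, hlen1, hh1, hl1⟩ := h1
  obtain ⟨l2, hc2, -, hlen2, hh2, hl2⟩ := h2
  match l2, hlen2 with
  | a :: b :: t, _ =>
    have ha : a = v := by simpa using hh2
    subst ha
    refine walk_to_path E (l1 ++ b :: t).length (l1 ++ b :: t) u w le_rfl ?_ ?_ ?_ huw
    · refine List.isChain_append.2 ⟨hc1, (List.isChain_cons_cons.1 hc2).2, ?_⟩
      intro x hx y hy
      have hx' : x = a := by rw [hl1] at hx; simpa using hx.symm
      have hy' : y = b := by simpa using hy.symm
      subst hx'; subst hy'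
      exact (List.isChain_cons_cons.1 hc2).1
    · have : l1 ≠ [] := by rintro rfl; simp at hh1
      rwa [List.head?_append_of_ne_nil _ this]
    · rw [List.getLast?_append_of_ne_nil _ (by simp)]
      rw [List.getLast?_cons_cons] at hl2
      exact hl2

lemma mem_AnSet_iff {E : V → V → Prop} {S : Set V} {v : V} :
    v ∈ AnSet E S ↔ v ∈ S ∨ ∃ a ∈ S, DirPathConn E v a := by
  unfold AnSet anSet
  by_cases hv : v ∈ S <;> simp [hv]

lemma AnSet_insert {E : V → V → Prop} {S : Set V} {γ : V} (hγ : γ ∈ AnSet E S) :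
    AnSet E (insert γ S) = AnSet E S := by
  ext v
  rw [mem_AnSet_iff, mem_AnSet_iff]
  constructor
  · rintro (hv | ⟨a, ha, hpath⟩)
    · rcases hv with rfl | hv
      · rwa [mem_AnSet_iff] at hγ
      · exact Or.inl hv
    · rcases ha with rfl | ha
      · rw [mem_AnSet_iff] at hγ
        rcases hγ with hγS | ⟨b, hbS, hγb⟩
        · exact Or.inr ⟨a, hγS, hpath⟩
        · by_cases hvb : v = b
          · exact Or.inl (hvb ▸ hbS)
          · exact Or.inr ⟨b, hbS, hpath.trans' hγb hvb⟩
      · exact Or.inr ⟨a, ha, hpath⟩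
  · rintro (hv | ⟨a, ha, hpath⟩)
    · exact Or.inl (Or.inr hv)
    · exact Or.inr ⟨a, Or.inr ha, hpath⟩

lemma chain'_mono_mem {R S : V → V → Prop} :
    ∀ {l : List V}, l.Chain' R → (∀ a ∈ l, ∀ b ∈ l, R a b → S a b) → l.Chain' S := by
  intro l
  induction l with
  | nil => intro _ _; exact List.isChain_nil
  | cons a t ih =>
    intro h himp
    cases t with
    | nil => exact List.isChain_singleton _
    | cons b u =>
      rw [List.Chain', List.isChain_cons_cons] at h ⊢
      refine ⟨himp a (by simp) b (by simp) h.1, ih h.2 ?_⟩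
      intro x hx y hy
      exact himp x (List.mem_cons_of_mem _ hx) y (List.mem_cons_of_mem _ hy)

/-- If `γ ∈ an(A ∪ B ∪ C) \ (A ∪ B ∪ C)` and `A ⊥_g {γ} | (B ∪ C)` holds in
the moral graph `(G^B_{An(A ∪ B ∪ C)})^m`, then `A ir_δ {γ} | (B ∪ C)`. -/
theorem deltaSep_of_uSep_ancestor [Fintype V] (E : V → V → Prop)
    (hE : ∀ j k, E j k → j ≠ k) (A B C : Set V)
    (hAB : Disjoint A B) (hAC : Disjoint A C) (hBC : Disjoint B C)
    (γ : V) (hγ : γ ∈ anSet E (A ∪ B ∪ C) \ (A ∪ B ∪ C))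
    (h : uSep (moralGraph (inducedGraph (delOut E B) (AnSet E (A ∪ B ∪ C))))
      A {γ} (B ∪ C)) :
    deltaSep E A {γ} (B ∪ C) := by
  obtain ⟨hγan, hγnot⟩ := hγ
  have hγA : γ ∉ A := fun hx => hγnot (Or.inl (Or.inl hx))
  have hγBC : γ ∉ B ∪ C := by
    rintro (hx | hx)
    · exact hγnot (Or.inl (Or.inr hx))
    · exact hγnot (Or.inr hx)
  have hset1 : A \ ({γ} ∪ (B ∪ C)) = A := by
    ext x
    simp only [mem_diff, mem_union, mem_singleton_iff]
    constructor
    · exact fun hx => hx.1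
    · intro hx
      refine ⟨hx, ?_⟩
      rintro (rfl | hx' | hx')
      · exact hγA hx
      · exact Set.disjoint_left.1 hAB hx hx'
      · exact Set.disjoint_left.1 hAC hx hx'
  have hset2 : (B ∪ C) \ {γ} = B ∪ C := Set.diff_singleton_eq_self hγBC
  have hset3 : A ∪ {γ} ∪ (B ∪ C) = insert γ (A ∪ B ∪ C) := by
    ext x
    simp only [mem_union, mem_singleton_iff, mem_insert_iff]
    tauto
  unfold deltaSep deltaSepDisjoint
  rw [hset1, hset2, hset3, AnSet_insert (Or.inr hγan)]
  intro v hv w hw l hl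
  rw [mem_singleton_iff] at hw
  by_contra hc
  push_neg at hc
  have hnotB : ∀ x ∈ l, x ∉ B := fun x hx hxB => hc x (Or.inl hxB) hx
  obtain ⟨hch, hnd, hlen, hhd, hlast⟩ := hl
  have hch' : l.Chain'
      (moralGraph (inducedGraph (delOut E B) (AnSet E (A ∪ B ∪ C)))) := by
    refine chain'_mono_mem hch ?_
    intro a ha b hb hab
    simp only [moralGraph, inducedGraph, delOut] at hab ⊢
    obtain ⟨hne, hcase⟩ := hab
    refine ⟨hne, ?_⟩
    rcases hcase with ⟨⟨he, -⟩, hm1, hm2⟩ | ⟨⟨he, -⟩, hm1, hm2⟩ |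
        ⟨c', ⟨⟨he1, -⟩, hm1a, hm1c⟩, ⟨⟨he2, -⟩, hm2a, hm2c⟩⟩
    · exact Or.inl ⟨⟨he, hnotB a ha⟩, hm1, hm2⟩
    · exact Or.inr (Or.inl ⟨⟨he, hnotB b hb⟩, hm1, hm2⟩)
    · exact Or.inr (Or.inr ⟨c', ⟨⟨he1, hnotB a ha⟩, hm1a, hm1c⟩,
        ⟨⟨he2, hnotB b hb⟩, hm2a, hm2c⟩⟩)
  obtain ⟨c, hcBC, hcl⟩ := h v hv γ rfl l ⟨hch', hnd, hlen, hhd, hw ▸ hlast⟩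
  exact hc c hcBC hcl
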